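/- arXiv:2202.07739 — 2 statements merged into one kernel-verified Lean document; each statement's English description precedes it below -/
import Mathlib

section
/- The set T₁₀ lies in the c₁₀-sublevel set of V₁: let ζ > 0, M > 0, ε₁₀ > 0 and c₁₀ > 0 be given, set c̃₁₀ := ε₁₀·α and d₁₀ := c₁₀ - (c̃₁₀/α)² - (ζ²/M)(c̃₁₀²/α), and assume d₁₀ > 0. Then every (z₁, z₂) ∈ ℝ^n × ℝ^n with ‖∇L(z₁)‖ ≤ c̃₁₀ and ‖z₂‖² ≤ d₁₀ satisfies V₁((z₁, z₂), τ) ≤ c₁₀ for every τ ≥ 0. -/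
open scoped RealInnerProductSpace

noncomputable section

/-- Subgradient inequality for a `C¹` convex function. -/
lemma grad_subgrad_ineq {n : ℕ} (L : EuclideanSpace ℝ (Fin n) → ℝ)
    (hC1 : ContDiff ℝ 1 L) (hconv : ConvexOn ℝ Set.univ L)
    (x y : EuclideanSpace ℝ (Fin n)) :
    ⟪gradient L x, y - x⟫ ≤ L y - L x := by
  have hdiff : DifferentiableAt ℝ L x :=
    (hC1.differentiable one_ne_zero).differentiableAt
  set g : ℝ → ℝ := fun t => L (x + t • (y - x)) with hg
  have hgc : ConvexOn ℝ Set.univ g := by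
    have := hconv.comp_affineMap (AffineMap.lineMap x y)
    have heq : g = L ∘ (AffineMap.lineMap x y) := by
      funext t
      simp [hg, AffineMap.lineMap_apply, add_comm]
    rw [heq]
    simpa using this
  have hcurve : HasDerivAt (fun t : ℝ => x + t • (y - x)) (y - x) 0 := by
    simpa using ((hasDerivAt_id (0 : ℝ)).smul_const (y - x)).const_add x
  have hderiv : HasDerivAt g (fderiv ℝ L x (y - x)) 0 := by
    have hL' : HasFDerivAt L (fderiv ℝ L x) (x + (0:ℝ) • (y - x)) := by
      simpa using hdiff.hasFDerivAt
    exact hL'.comp_hasDerivAt 0 hcurve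
  have hslope := hgc.le_slope_of_hasDerivAt (Set.mem_univ (0:ℝ)) (Set.mem_univ (1:ℝ))
    zero_lt_one hderiv
  have hfd : fderiv ℝ L x (y - x) = ⟪gradient L x, y - x⟫ := by
    rw [gradient, ← InnerProductSpace.toDual_apply_apply]
    simp
  rw [hfd] at hslope
  have hs : slope g 0 1 = L y - L x := by
    simp [slope, hg]
  rw [hs] at hslope
  exact hslope

/-- The set `T₁₀` lies in the `c₁₀`-sublevel set of `V₁`:
with `c̃₁₀ = ε₁₀ α` and `d₁₀ = c₁₀ - (c̃₁₀/α)² - (ζ²/M)(c̃₁₀²/α) > 0`, every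
`(z₁, z₂)` with `‖∇L(z₁)‖ ≤ c̃₁₀` and `‖z₂‖² ≤ d₁₀` satisfies
`V₁((z₁,z₂),τ) ≤ c₁₀` for all `τ ≥ 0`. -/
theorem T10_in_sublevel_V1 {n : ℕ} (hn : 1 ≤ n)
    (L : EuclideanSpace ℝ (Fin n) → ℝ)
    (hC1 : ContDiff ℝ 1 L)
    (hconv : ConvexOn ℝ Set.univ L)
    (zs : EuclideanSpace ℝ (Fin n))
    (hmin : ∀ z, L zs ≤ L z)
    (huniq : ∀ z, (∀ y, L z ≤ L y) → z = zs)
    (α : ℝ) (hα : 0 < α)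
    (hQG : ∀ z, α * ‖z - zs‖ ^ 2 ≤ L z - L zs)
    (ζ M ε₁₀ c₁₀ : ℝ) (hζ : 0 < ζ) (hM : 0 < M) (hε₁₀ : 0 < ε₁₀) (hc₁₀ : 0 < c₁₀)
    (hd₁₀ : 0 < c₁₀ - ((ε₁₀ * α) / α) ^ 2 - (ζ ^ 2 / M) * ((ε₁₀ * α) ^ 2 / α)) :
    ∀ z₁ z₂ : EuclideanSpace ℝ (Fin n),
      ‖gradient L z₁‖ ≤ ε₁₀ * α →
      ‖z₂‖ ^ 2 ≤ c₁₀ - ((ε₁₀ * α) / α) ^ 2 - (ζ ^ 2 / M) * ((ε₁₀ * α) ^ 2 / α) →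
      ∀ τ : ℝ, 0 ≤ τ →
        (1 / 2) * ‖(2 / (τ + 2)) • (z₁ - zs) + z₂‖ ^ 2
          + (ζ ^ 2 / M) * (L z₁ - L zs) ≤ c₁₀ := by
  intro z₁ z₂ hgrad hz₂ τ hτ
  set r : ℝ := ‖z₁ - zs‖ with hr
  have hr0 : 0 ≤ r := norm_nonneg _
  -- L z₁ - L zs ≤ ⟪∇L z₁, z₁ - zs⟫ ≤ ‖∇L z₁‖ * r
  have hsub := grad_subgrad_ineq L hC1 hconv z₁ zs
  have hinner : ⟪gradient L z₁, z₁ - zs⟫ ≤ ‖gradient L z₁‖ * r :=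
    (real_inner_le_norm _ _).trans (le_of_eq rfl)
  have hLle : L z₁ - L zs ≤ (ε₁₀ * α) * r := by
    have h1 : L z₁ - L zs ≤ ⟪gradient L z₁, z₁ - zs⟫ := by
      have := grad_subgrad_ineq L hC1 hconv z₁ zs
      have h2 : ⟪gradient L z₁, zs - z₁⟫ = - ⟪gradient L z₁, z₁ - zs⟫ := by
        rw [← inner_neg_right]; congr 1; abel
      linarith [grad_subgrad_ineq L hC1 hconv z₁ zs, h2.symm ▸ this]
    calc L z₁ - L zs ≤ ⟪gradient L z₁, z₁ - zs⟫ := h1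
      _ ≤ ‖gradient L z₁‖ * r := hinner
      _ ≤ (ε₁₀ * α) * r := by
          apply mul_le_mul_of_nonneg_right hgrad hr0
  have hQ : α * r ^ 2 ≤ L z₁ - L zs := hQG z₁
  -- r ≤ ε₁₀
  have hrε : r ≤ ε₁₀ := by
    by_contra h
    push_neg at h
    have hpos : 0 < (α * r) * (r - ε₁₀) :=
      mul_pos (mul_pos hα (hε₁₀.trans h)) (sub_pos.mpr h)
    nlinarith
  have hL2 : L z₁ - L zs ≤ ε₁₀ ^ 2 * α := by
    calc L z₁ - L zs ≤ (ε₁₀ * α) * r := hLle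
      _ ≤ (ε₁₀ * α) * ε₁₀ := by
          exact mul_le_mul_of_nonneg_left hrε (le_of_lt (mul_pos hε₁₀ hα))
      _ = ε₁₀ ^ 2 * α := by ring
  -- norm of the scaled term
  have hfrac : 0 < 2 / (τ + 2) := by positivity
  have hfrac1 : 2 / (τ + 2) ≤ 1 := by
    rw [div_le_one (by linarith)]; linarith
  have hanorm : ‖(2 / (τ + 2)) • (z₁ - zs)‖ ≤ ε₁₀ := by
    rw [norm_smul, Real.norm_eq_abs, abs_of_pos hfrac]
    calc (2 / (τ + 2)) * r ≤ 1 * r := mul_le_mul_of_nonneg_right hfrac1 hr0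
      _ = r := one_mul r
      _ ≤ ε₁₀ := hrε
  have htri : ‖(2 / (τ + 2)) • (z₁ - zs) + z₂‖ ≤ ε₁₀ + ‖z₂‖ := by
    calc ‖(2 / (τ + 2)) • (z₁ - zs) + z₂‖ ≤ ‖(2 / (τ + 2)) • (z₁ - zs)‖ + ‖z₂‖ :=
          norm_add_le _ _
      _ ≤ ε₁₀ + ‖z₂‖ := by linarith
  have hsq : ‖(2 / (τ + 2)) • (z₁ - zs) + z₂‖ ^ 2 ≤ (ε₁₀ + ‖z₂‖) ^ 2 := by
    exact pow_le_pow_left₀ (norm_nonneg _) htri 2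
  have hd₁₀eq : c₁₀ - ((ε₁₀ * α) / α) ^ 2 - (ζ ^ 2 / M) * ((ε₁₀ * α) ^ 2 / α)
      = c₁₀ - ε₁₀ ^ 2 - (ζ ^ 2 / M) * (ε₁₀ ^ 2 * α) := by
    field_simp
  rw [hd₁₀eq] at hz₂ hd₁₀
  have hζM : 0 ≤ ζ ^ 2 / M := by positivity
  have hfinal : (ζ ^ 2 / M) * (L z₁ - L zs) ≤ (ζ ^ 2 / M) * (ε₁₀ ^ 2 * α) :=
    mul_le_mul_of_nonneg_left hL2 hζM
  nlinarith [norm_nonneg z₂, sq_nonneg (ε₁₀ - ‖z₂‖)]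
end
end

section
/- Exponential decrease of V along heavy ball solutions: let m ∈ (0,1), set ψ := mαγ/λ, assume ψ < λ (so that ν := ψ(ψ - λ) < 0), and set κ := min{(1 - m)ψ, 2(λ - ψ)} > 0. Then along every solution of the heavy ball system, d/dt [V(z₁(t), z₂(t))] ≤ -κ·V(z₁(t), z₂(t)) for all t ≥ 0. -/
open scoped RealInnerProductSpace

noncomputable section

lemma key_ineq (ψ lam κ γ m α a b c ℓ g : ℝ)
    (hψ : 0 < ψ) (hψl : ψ < lam) (hγ : 0 < γ) (hα : 0 < α)
    (hm0 : 0 < m) (hm1 : m < 1)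
    (hψdef : ψ * lam = m * α * γ)
    (hκ1 : κ ≤ (1 - m) * ψ) (hκ2 : κ ≤ 2 * (lam - ψ)) (hκ0 : 0 ≤ κ)
    (ha : 0 ≤ a) (hb : 0 ≤ b) (hc1 : c ≤ a * b) (hc2 : -(a * b) ≤ c)
    (hℓ : α * a ^ 2 ≤ ℓ) (hg : ℓ ≤ g) :
    2 * (ψ * (ψ - lam)) * c + (ψ - lam) * b ^ 2 - γ * ψ * g ≤
      -κ * (γ * ℓ + (1 / 2) * (ψ ^ 2 * a ^ 2 + 2 * ψ * c + b ^ 2)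
        + (ψ * (ψ - lam) / 2) * a ^ 2) := by
  have hβ : 0 ≤ lam - ψ - κ / 2 := by linarith
  have hmψ : 0 < m * ψ := mul_pos hm0 hψ
  have hψκ : 0 ≤ (1 - m) * ψ - κ := by linarith
  have hψκ' : 0 ≤ ψ - κ := by nlinarith
  have hT1 : 0 ≤ γ * ψ * (g - ℓ) :=
    mul_nonneg (mul_nonneg hγ.le hψ.le) (by linarith)
  have hT2 : 0 ≤ γ * (ψ - κ) * (ℓ - α * a ^ 2) :=
    mul_nonneg (mul_nonneg hγ.le hψκ') (by linarith)
  have hT3 : 0 ≤ ((1 - m) * ψ - κ) * (γ * α * a ^ 2) :=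
    mul_nonneg hψκ (by positivity)
  have hT4 : 0 ≤ (lam - ψ - κ / 2) * (ψ * a - b) ^ 2 :=
    mul_nonneg hβ (sq_nonneg _)
  have hT5 : 0 ≤ 2 * ψ * (lam - ψ - κ / 2) * (c + a * b) :=
    mul_nonneg (mul_nonneg (by linarith) hβ) (by linarith)
  have hT6 : 0 ≤ ψ ^ 3 * a ^ 2 := by positivity
  have hT7 : 0 ≤ ψ * κ * (lam - ψ) / 2 * a ^ 2 :=
    mul_nonneg (div_nonneg (mul_nonneg (mul_nonneg hψ.le hκ0) (by linarith)) (by norm_num))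
      (sq_nonneg a)
  have hψdef2 : ψ * lam * (ψ * a ^ 2) = m * α * γ * (ψ * a ^ 2) := by rw [hψdef]
  linarith [hT1, hT2, hT3, hT4, hT5, hT6, hT7, hψdef2]

lemma grad_ineq {n : ℕ} (L : EuclideanSpace ℝ (Fin n) → ℝ) (hd : Differentiable ℝ L)
    (hconv : ConvexOn ℝ Set.univ L) (x y : EuclideanSpace ℝ (Fin n)) :
    ⟪gradient L x, y - x⟫ ≤ L y - L x := by
  set v := y - x with hv
  have h1 : HasDerivAt (fun t : ℝ => x + t • v) v 0 := by
    simpa using ((hasDerivAt_id (0 : ℝ)).smul_const v).const_add x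
  have h2 : HasFDerivAt L ((InnerProductSpace.toDual ℝ _) (gradient L x))
      (x + (0 : ℝ) • v) := by
    simpa using ((hd x).hasGradientAt).hasFDerivAt
  have h3 : HasDerivAt (fun t : ℝ => L (x + t • v)) ⟪gradient L x, v⟫ 0 := by
    have := h2.comp_hasDerivAt 0 h1
    simp only [InnerProductSpace.toDual_apply_apply] at this
    exact this
  have hgconv : ConvexOn ℝ Set.univ (fun t : ℝ => L (x + t • v)) := by
    have h := hconv.comp_affineMap (AffineMap.lineMap x y)
    have heq : (L ∘ (AffineMap.lineMap x y) : ℝ → ℝ) = fun t : ℝ => L (x + t • v) := by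
      funext t
      simp only [Function.comp_apply, AffineMap.lineMap_apply, vsub_eq_sub, vadd_eq_add, hv]
      rw [add_comm]
    simpa [heq] using h
  have hs := hgconv.le_slope_of_hasDerivAt (Set.mem_univ (0 : ℝ)) (Set.mem_univ 1)
    one_pos h3
  have hval : slope (fun t : ℝ => L (x + t • v)) 0 1 = L y - L x := by
    simp [slope, hv]
  rw [hval] at hs
  exact hs


/-- Exponential decrease of `V` along heavy ball solutions: with `ψ = mαγ/λ < λ`
and `κ = min{(1-m)ψ, 2(λ-ψ)}`, `d/dt V(z(t)) ≤ -κ V(z(t))` for all `t ≥ 0`. -/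
theorem heavyBall_V_exponential_decrease {n : ℕ} (hn : 1 ≤ n)
    (L : EuclideanSpace ℝ (Fin n) → ℝ)
    (hC1 : ContDiff ℝ 1 L)
    (hconv : ConvexOn ℝ Set.univ L)
    (zs : EuclideanSpace ℝ (Fin n))
    (hmin : ∀ z, L zs ≤ L z)
    (huniq : ∀ z, (∀ y, L z ≤ L y) → z = zs)
    (α : ℝ) (hα : 0 < α)
    (hQG : ∀ z, α * ‖z - zs‖ ^ 2 ≤ L z - L zs)
    (lam γ m : ℝ) (hlam : 0 < lam) (hγ : 0 < γ) (hm0 : 0 < m) (hm1 : m < 1)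
    (hψlt : m * α * γ / lam < lam)
    (z₁ z₂ : ℝ → EuclideanSpace ℝ (Fin n))
    (hz₁ : ∀ t, 0 ≤ t → HasDerivAt z₁ (z₂ t) t)
    (hz₂ : ∀ t, 0 ≤ t →
      HasDerivAt z₂ (-(lam • z₂ t) - γ • gradient L (z₁ t)) t) :
    ∀ t, 0 ≤ t →
      deriv (fun s =>
          γ * (L (z₁ s) - L zs)
            + (1 / 2) * ‖(m * α * γ / lam) • (z₁ s - zs) + z₂ s‖ ^ 2
            + ((m * α * γ / lam) * ((m * α * γ / lam) - lam) / 2)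
                * ‖z₁ s - zs‖ ^ 2) t
        ≤ -(min ((1 - m) * (m * α * γ / lam)) (2 * (lam - m * α * γ / lam)))
            * (γ * (L (z₁ t) - L zs)
              + (1 / 2) * ‖(m * α * γ / lam) • (z₁ t - zs) + z₂ t‖ ^ 2
              + ((m * α * γ / lam) * ((m * α * γ / lam) - lam) / 2)
                  * ‖z₁ t - zs‖ ^ 2) := by
  intro t ht
  set ψ : ℝ := m * α * γ / lam with hψ
  have hψpos : 0 < ψ := by rw [hψ]; positivity
  have hψdef : ψ * lam = m * α * γ := div_mul_cancel₀ _ hlam.ne'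
  clear_value ψ
  have hd : Differentiable ℝ L := hC1.differentiable one_ne_zero
  -- derivatives
  have hde : HasDerivAt (fun s => z₁ s - zs) (z₂ t) t := (hz₁ t ht).sub_const zs
  have hF : HasFDerivAt L ((InnerProductSpace.toDual ℝ _) (gradient L (z₁ t))) (z₁ t) :=
    ((hd (z₁ t)).hasGradientAt).hasFDerivAt
  have hLz : HasDerivAt (fun s => L (z₁ s)) ⟪gradient L (z₁ t), z₂ t⟫ t := by
    have := hF.comp_hasDerivAt t (hz₁ t ht)
    simp only [InnerProductSpace.toDual_apply_apply] at this
    exact this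
  have hw : HasDerivAt (fun s => ψ • (z₁ s - zs) + z₂ s)
      (ψ • z₂ t + (-(lam • z₂ t) - γ • gradient L (z₁ t))) t :=
    (hde.const_smul ψ).add (hz₂ t ht)
  set w' : EuclideanSpace ℝ (Fin n) :=
    ψ • z₂ t + (-(lam • z₂ t) - γ • gradient L (z₁ t)) with hw'
  have hwsq : HasDerivAt (fun s => ‖ψ • (z₁ s - zs) + z₂ s‖ ^ 2)
      (⟪ψ • (z₁ t - zs) + z₂ t, w'⟫ + ⟪w', ψ • (z₁ t - zs) + z₂ t⟫) t := by
    have := hw.inner ℝ hw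
    simpa only [real_inner_self_eq_norm_sq] using this
  have hesq : HasDerivAt (fun s => ‖z₁ s - zs‖ ^ 2)
      (⟪z₁ t - zs, z₂ t⟫ + ⟪z₂ t, z₁ t - zs⟫) t := by
    have := hde.inner ℝ hde
    simpa only [real_inner_self_eq_norm_sq] using this
  have hV : HasDerivAt (fun s =>
      γ * (L (z₁ s) - L zs) + (1 / 2) * ‖ψ • (z₁ s - zs) + z₂ s‖ ^ 2
        + (ψ * (ψ - lam) / 2) * ‖z₁ s - zs‖ ^ 2)
      (γ * ⟪gradient L (z₁ t), z₂ t⟫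
        + (1 / 2) * (⟪ψ • (z₁ t - zs) + z₂ t, w'⟫ + ⟪w', ψ • (z₁ t - zs) + z₂ t⟫)
        + (ψ * (ψ - lam) / 2) * (⟪z₁ t - zs, z₂ t⟫ + ⟪z₂ t, z₁ t - zs⟫)) t :=
    (((hLz.sub_const (L zs)).const_mul γ).add (hwsq.const_mul (1 / 2))).add
      (hesq.const_mul (ψ * (ψ - lam) / 2))
  rw [hV.deriv]
  -- abbreviations
  have hℓa : α * ‖z₁ t - zs‖ ^ 2 ≤ L (z₁ t) - L zs := hQG (z₁ t)
  have hℓg : L (z₁ t) - L zs ≤ ⟪gradient L (z₁ t), z₁ t - zs⟫ := by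
    have h := grad_ineq L hd hconv (z₁ t) zs
    rw [show zs - z₁ t = -(z₁ t - zs) by abel, inner_neg_right] at h
    linarith [h]
  set q : EuclideanSpace ℝ (Fin n) := z₁ t - zs with hq
  set G : EuclideanSpace ℝ (Fin n) := gradient L (z₁ t) with hG
  clear_value q G
  set a : ℝ := ‖q‖ with h_a
  set b : ℝ := ‖z₂ t‖ with h_b
  set c : ℝ := ⟪q, z₂ t⟫ with h_c
  set g : ℝ := ⟪G, q⟫ with h_g
  set ℓ : ℝ := L (z₁ t) - L zs with h_ℓ
  have hcomm1 : ⟪q, G⟫ = g := real_inner_comm _ _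
  have hcomm2 : ⟪z₂ t, q⟫ = c := real_inner_comm _ _
  have hcomm3 : ⟪z₂ t, G⟫ = ⟪G, z₂ t⟫ := real_inner_comm _ _
  have hbb : ⟪z₂ t, z₂ t⟫ = b ^ 2 := real_inner_self_eq_norm_sq _
  have hD : γ * ⟪G, z₂ t⟫
      + (1 / 2) * (⟪ψ • q + z₂ t, w'⟫ + ⟪w', ψ • q + z₂ t⟫)
      + (ψ * (ψ - lam) / 2) * (⟪q, z₂ t⟫ + ⟪z₂ t, q⟫)
      = 2 * (ψ * (ψ - lam)) * c + (ψ - lam) * b ^ 2 - γ * ψ * g := by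
    rw [hw']
    simp only [inner_add_left, inner_add_right, inner_sub_left, inner_sub_right,
      inner_neg_left, inner_neg_right, real_inner_smul_left, real_inner_smul_right,
      hcomm1, hcomm2, hcomm3, hbb, ← h_c, ← h_g]
    ring
  have hwnorm : ‖ψ • q + z₂ t‖ ^ 2 = ψ ^ 2 * a ^ 2 + 2 * ψ * c + b ^ 2 := by
    rw [norm_add_sq_real, norm_smul, real_inner_smul_left, Real.norm_eq_abs,
      mul_pow, sq_abs, ← h_a, ← h_b, ← h_c]
    ring
  have habs := abs_le.1 (abs_real_inner_le_norm q (z₂ t))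
  rw [hD, hwnorm]
  exact key_ineq ψ lam _ γ m α a b c ℓ g hψpos hψlt hγ hα hm0 hm1 hψdef
    (min_le_left _ _) (min_le_right _ _)
    (le_min (le_of_lt (by nlinarith)) (by linarith)) (norm_nonneg _) (norm_nonneg _)
    habs.2 habs.1 hℓa hℓg
end
end
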